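/- Let n > 1. A subset S of M_n(F) generates M_n(F) as a unital F-algebra if and only if S generates M_n(F) as a non-unital F-algebra. -/

import Mathlib

open Matrix

theorem stmt_1 (F : Type*) [Field F] (n : ℕ) (hn : 1 < n)
    (S : Set (Matrix (Fin n) (Fin n) F)) :
    Algebra.adjoin F S = ⊤ ↔ NonUnitalAlgebra.adjoin F S = ⊤ := by
  constructor
  · intro h
    set A := NonUnitalAlgebra.adjoin F S with hA
    -- decomposition: every element is a + c • 1 with a ∈ A
    have decomp : ∀ x : Matrix (Fin n) (Fin n) F, ∃ a ∈ A, ∃ c : F, x = a + c • 1 := by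
      intro x
      have hx : x ∈ Algebra.adjoin F S := h ▸ trivial
      induction hx using Algebra.adjoin_induction with
      | mem s hs => exact ⟨s, NonUnitalAlgebra.subset_adjoin F hs, 0, by simp⟩
      | algebraMap r => exact ⟨0, zero_mem A, r, by simp [Algebra.algebraMap_eq_smul_one]⟩
      | add x y hx hy ihx ihy =>
          obtain ⟨a, ha, c, rfl⟩ := ihx
          obtain ⟨b, hb, d, rfl⟩ := ihy
          exact ⟨a + b, add_mem ha hb, c + d, by rw [add_smul]; abel⟩
      | mul x y hx hy ihx ihy =>
          obtain ⟨a, ha, c, rfl⟩ := ihx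
          obtain ⟨b, hb, d, rfl⟩ := ihy
          refine ⟨a * b + d • a + c • b, ?_, c * d, ?_⟩
          · exact add_mem (add_mem (mul_mem ha hb) (SMulMemClass.smul_mem d ha))
              (SMulMemClass.smul_mem c hb)
          · simp only [mul_add, add_mul, mul_smul_comm, smul_mul_assoc, smul_smul, smul_add, mul_one,
              one_mul, mul_comm d c]
            abel
    -- key: for i ≠ j, either 1 ∈ A or E_ij ∈ A
    have key : ∀ i j : Fin n, j ≠ i →
        (1 : Matrix (Fin n) (Fin n) F) ∈ A ∨ Matrix.single i j (1 : F) ∈ A := by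
      intro i j hij
      obtain ⟨a, ha, c, hE⟩ := decomp (Matrix.single i j (1 : F))
      by_cases hc : c = 0
      · right; rw [hc, zero_smul, add_zero] at hE; rwa [hE]
      · left
        have ha' : a = Matrix.single i j (1 : F) - c • 1 := by rw [hE]; abel
        have hEE : Matrix.single i j (1 : F) * Matrix.single i j (1 : F) = 0 :=
          Matrix.single_mul_single_of_ne (c := (1 : F)) i j i hij 1
        have hcomp : a * a + (2 * c) • a = (-(c * c)) • (1 : Matrix (Fin n) (Fin n) F) := by
          rw [ha']
          simp only [mul_sub, sub_mul, mul_smul_comm, smul_mul_assoc, smul_smul, hEE,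
            two_mul, add_smul, smul_sub, mul_one, one_mul, neg_smul]
          module
        have hmem : (-(c * c)) • (1 : Matrix (Fin n) (Fin n) F) ∈ A := by
          rw [← hcomp]
          exact add_mem (mul_mem ha ha) (SMulMemClass.smul_mem _ ha)
        have h1 : (1 : Matrix (Fin n) (Fin n) F)
            = (-(c * c))⁻¹ • ((-(c * c)) • (1 : Matrix (Fin n) (Fin n) F)) := by
          rw [smul_smul, inv_mul_cancel₀ (by simpa using mul_ne_zero hc hc), one_smul]
        rw [h1]
        exact SMulMemClass.smul_mem _ hmem
    -- 1 ∈ A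
    have h1 : (1 : Matrix (Fin n) (Fin n) F) ∈ A := by
      by_cases h1 : (1 : Matrix (Fin n) (Fin n) F) ∈ A
      · exact h1
      · exfalso
        have hoff : ∀ i j : Fin n, j ≠ i → Matrix.single i j (1 : F) ∈ A := by
          intro i j hij
          rcases key i j hij with h' | h'
          · exact absurd h' h1
          · exact h'
        have hdiag : ∀ i : Fin n, Matrix.single i i (1 : F) ∈ A := by
          intro i
          have h01 : (⟨0, by omega⟩ : Fin n) ≠ ⟨1, hn⟩ := by
            intro he
            exact absurd (congrArg Fin.val he) (by simp)
          set j : Fin n := if i = ⟨0, by omega⟩ then ⟨1, hn⟩ else ⟨0, by omega⟩ with hj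
          have hji : j ≠ i := by
            rcases eq_or_ne i ⟨0, by omega⟩ with h' | h'
            · rw [hj, if_pos h', h']; exact h01.symm
            · rw [hj, if_neg h']; exact fun he => h' he.symm
          have := mul_mem (hoff i j hji) (hoff j i (Ne.symm hji))
          rwa [Matrix.single_mul_single_same, one_mul] at this
        have hsum : (1 : Matrix (Fin n) (Fin n) F) = ∑ i : Fin n, Matrix.single i i (1 : F) := by
          ext k l
          rw [Matrix.sum_apply]
          rcases eq_or_ne k l with rfl | hkl
          · simp [Matrix.single, Matrix.one_apply, Finset.sum_ite_eq']
          · rw [Matrix.one_apply_ne hkl]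
            refine (Finset.sum_eq_zero fun i _ => ?_).symm
            simp only [Matrix.single, Matrix.of_apply]
            rw [if_neg]
            rintro ⟨rfl, rfl⟩
            exact hkl rfl
        exact h1 (hsum ▸ sum_mem fun i _ => hdiag i)
    -- conclude A = ⊤
    rw [hA, NonUnitalAlgebra.eq_top_iff]
    intro x
    rw [← hA]
    obtain ⟨a, ha, c, rfl⟩ := decomp x
    exact add_mem ha (SMulMemClass.smul_mem c h1)
  · intro h
    have hle := NonUnitalAlgebra.adjoin_le_algebra_adjoin F S
    rw [h, top_le_iff] at hle
    rw [eq_top_iff]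
    intro x _
    have : x ∈ (Algebra.adjoin F S).toNonUnitalSubalgebra := hle ▸ trivial
    exact this
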